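/- The natural reduction map O(E8) → O(E8/2E8), sending an isometry of the E8 lattice to the induced automorphism of the quadratic space E8/2E8 over 𝔽₂, is surjective. -/

import Mathlib

/-- A Gram matrix of the `E8` root lattice (the Cartan matrix of `E8`):
even, unimodular, positive definite of rank `8`. -/
def gramE8 : Matrix (Fin 8) (Fin 8) ℤ :=
  !![ 2,-1, 0, 0, 0, 0, 0, 0;
     -1, 2,-1, 0, 0, 0, 0, 0;
      0,-1, 2,-1, 0, 0, 0,-1;
      0, 0,-1, 2,-1, 0, 0, 0;
      0, 0, 0,-1, 2,-1, 0, 0;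
      0, 0, 0, 0,-1, 2,-1, 0;
      0, 0, 0, 0, 0,-1, 2, 0;
      0, 0,-1, 0, 0, 0, 0, 2]

/-- The bilinear form of the `E8` lattice on `ℤ^8`. -/
noncomputable def bE8 : LinearMap.BilinForm ℤ (Fin 8 → ℤ) := Matrix.toBilin' gramE8

/-- The reduction map `E8 → E8/2E8 ≅ 𝔽₂^8`. -/
def redE8 (x : Fin 8 → ℤ) : Fin 8 → ZMod 2 := fun i => (x i : ZMod 2)

/-- The quadratic form `q(e + 2E8) = ½(e,e)_{E8} mod 2` on `E8/2E8 ≅ 𝔽₂^8`, computed via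
the canonical lift.  (Since `E8` is even, this function is the well-defined discriminant
quadratic form of the quotient.) -/
noncomputable def qbarE8 (x : Fin 8 → ZMod 2) : ZMod 2 :=
  ((bE8 (fun i => ((x i).val : ℤ)) (fun i => ((x i).val : ℤ))) / 2 : ℤ)

/-- explicit formula for bE8 -/
lemma bE8_apply (x y : Fin 8 → ℤ) : bE8 x y =
    2*(x 0*y 0 + x 1*y 1 + x 2*y 2 + x 3*y 3 + x 4*y 4 + x 5*y 5 + x 6*y 6 + x 7*y 7)
    - (x 0*y 1 + x 1*y 0) - (x 1*y 2 + x 2*y 1) - (x 2*y 3 + x 3*y 2)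
    - (x 3*y 4 + x 4*y 3) - (x 4*y 5 + x 5*y 4) - (x 5*y 6 + x 6*y 5)
    - (x 2*y 7 + x 7*y 2) := by
  rw [bE8, Matrix.toBilin'_apply']
  simp only [Matrix.mulVec, dotProduct, Fin.sum_univ_eight]
  simp only [show gramE8 0 0 = (2:ℤ) from rfl, show gramE8 0 1 = (-1:ℤ) from rfl, show gramE8 0 2 = (0:ℤ) from rfl, show gramE8 0 3 = (0:ℤ) from rfl, show gramE8 0 4 = (0:ℤ) from rfl, show gramE8 0 5 = (0:ℤ) from rfl, show gramE8 0 6 = (0:ℤ) from rfl, show gramE8 0 7 = (0:ℤ) from rfl, show gramE8 1 0 = (-1:ℤ) from rfl, show gramE8 1 1 = (2:ℤ) from rfl, show gramE8 1 2 = (-1:ℤ) from rfl, show gramE8 1 3 = (0:ℤ) from rfl, show gramE8 1 4 = (0:ℤ) from rfl, show gramE8 1 5 = (0:ℤ) from rfl, show gramE8 1 6 = (0:ℤ) from rfl, show gramE8 1 7 = (0:ℤ) from rfl, show gramE8 2 0 = (0:ℤ) from rfl, show gramE8 2 1 = (-1:ℤ) from rfl, show gramE8 2 2 = (2:ℤ)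 from rfl, show gramE8 2 3 = (-1:ℤ) from rfl, show gramE8 2 4 = (0:ℤ) from rfl, show gramE8 2 5 = (0:ℤ) from rfl, show gramE8 2 6 = (0:ℤ) from rfl, show gramE8 2 7 = (-1:ℤ) from rfl, show gramE8 3 0 = (0:ℤ) from rfl, show gramE8 3 1 = (0:ℤ) from rfl, show gramE8 3 2 = (-1:ℤ) from rfl, show gramE8 3 3 = (2:ℤ) from rfl, show gramE8 3 4 = (-1:ℤ) from rfl, show gramE8 3 5 = (0:ℤ) from rfl, show gramE8 3 6 = (0:ℤ) from rfl, show gramE8 3 7 = (0:ℤ) from rfl, show gramE8 4 0 = (0:ℤ) from rfl, show gramE8 4 1 = (0:ℤ) from rfl, show gramE8 4 2 = (0:ℤ) from rfl, show gramE8 4 3 = (-1:ℤ) from rfl, show gramE8 4 4 = (2:ℤ) from rfl, show gramE8 4 5 = (-1:ℤ) from rfl, show gramE8 4 6 = (0:ℤ) from rfl, show gramE8 4 7 = (0:ℤ) from rfl, show gramE8 5 0 = (0:ℤ) from rfl, show gramE8 5 1 = (0:ℤ) from rfl, show gramE8 5 2 = (0:ℤ) from rfl, show gramE8 5 3 = (0:ℤ)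 from rfl, show gramE8 5 4 = (-1:ℤ) from rfl, show gramE8 5 5 = (2:ℤ) from rfl, show gramE8 5 6 = (-1:ℤ) from rfl, show gramE8 5 7 = (0:ℤ) from rfl, show gramE8 6 0 = (0:ℤ) from rfl, show gramE8 6 1 = (0:ℤ) from rfl, show gramE8 6 2 = (0:ℤ) from rfl, show gramE8 6 3 = (0:ℤ) from rfl, show gramE8 6 4 = (0:ℤ) from rfl, show gramE8 6 5 = (-1:ℤ) from rfl, show gramE8 6 6 = (2:ℤ) from rfl, show gramE8 6 7 = (0:ℤ) from rfl, show gramE8 7 0 = (0:ℤ) from rfl, show gramE8 7 1 = (0:ℤ) from rfl, show gramE8 7 2 = (-1:ℤ) from rfl, show gramE8 7 3 = (0:ℤ) from rfl, show gramE8 7 4 = (0:ℤ) from rfl, show gramE8 7 5 = (0:ℤ) from rfl, show gramE8 7 6 = (0:ℤ) from rfl, show gramE8 7 7 = (2:ℤ) from rfl]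
  ring

lemma bE8_symm (x y : Fin 8 → ℤ) : bE8 x y = bE8 y x := by
  rw [bE8_apply, bE8_apply]; ring

/-- half of the diagonal -/
def PZ (x : Fin 8 → ℤ) : ℤ :=
    (x 0*x 0 + x 1*x 1 + x 2*x 2 + x 3*x 3 + x 4*x 4 + x 5*x 5 + x 6*x 6 + x 7*x 7)
    - x 0*x 1 - x 1*x 2 - x 2*x 3 - x 3*x 4 - x 4*x 5 - x 5*x 6 - x 2*x 7

lemma bE8_self (x : Fin 8 → ℤ) : bE8 x x = 2 * PZ x := by
  rw [bE8_apply, PZ]; ring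

def qF (x : Fin 8 → ZMod 2) : ZMod 2 :=
    (x 0*x 0 + x 1*x 1 + x 2*x 2 + x 3*x 3 + x 4*x 4 + x 5*x 5 + x 6*x 6 + x 7*x 7)
    - x 0*x 1 - x 1*x 2 - x 2*x 3 - x 3*x 4 - x 4*x 5 - x 5*x 6 - x 2*x 7

def BF (x y : Fin 8 → ZMod 2) : ZMod 2 := qF (x + y) + qF x + qF y

lemma qF_red (z : Fin 8 → ℤ) : qF (redE8 z) = ((PZ z : ℤ) : ZMod 2) := by
  simp only [qF, PZ, redE8]; push_cast; ring

lemma red_lift (x : Fin 8 → ZMod 2) : redE8 (fun i => ((x i).val : ℤ)) = x := by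
  funext i; simp [redE8, ZMod.intCast_cast]

lemma red_add (a b : Fin 8 → ℤ) : redE8 (a + b) = redE8 a + redE8 b := by
  funext i; simp [redE8]

lemma qbar_eq_qF (x : Fin 8 → ZMod 2) : qbarE8 x = qF x := by
  rw [qbarE8, bE8_self, Int.mul_ediv_cancel_left _ (by norm_num)]
  rw [← red_lift x, qF_red]
  rw [red_lift]

lemma BF_red (a b : Fin 8 → ℤ) : BF (redE8 a) (redE8 b) = ((bE8 a b : ℤ) : ZMod 2) := by
  have h : PZ (a + b) = PZ a + PZ b + bE8 a b := by
    have h2 : bE8 (a+b) (a+b) = bE8 a a + bE8 a b + bE8 a b + bE8 b b := by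
      simp only [bE8_apply, Pi.add_apply]; ring
    have := bE8_self (a+b); rw [h2, bE8_self a, bE8_self b] at this; omega
  rw [BF, ← red_add, qF_red, qF_red, qF_red, h]
  push_cast
  have h2 : ∀ a : ZMod 2, a + a = 0 := by decide
  ring_nf
  rw [show ((2:ZMod 2)) = 0 from rfl]
  ring

/-- ℤ-side reflection in root r -/
noncomputable def Sfun (r x : Fin 8 → ℤ) : Fin 8 → ℤ := x - bE8 x r • r

/-- 𝔽₂-side reflection -/
def R (r : Fin 8 → ℤ) (x : Fin 8 → ZMod 2) : Fin 8 → ZMod 2 :=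
  x + BF x (redE8 r) • redE8 r

lemma sub_eq_add2 : ∀ u v : ZMod 2, u - v = u + v := by decide

lemma red_S (r z : Fin 8 → ℤ) : redE8 (Sfun r z) = R r (redE8 z) := by
  funext i
  simp only [Sfun, R, redE8, Pi.add_apply, Pi.sub_apply, Pi.smul_apply, smul_eq_mul,
    BF_red]
  push_cast
  rw [sub_eq_add2]

lemma S_pres {r : Fin 8 → ℤ} (hr : bE8 r r = 2) (x y : Fin 8 → ℤ) :
    bE8 (Sfun r x) (Sfun r y) = bE8 x y := by
  simp only [Sfun, map_sub, map_smul, LinearMap.sub_apply, LinearMap.smul_apply,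
    smul_eq_mul]
  rw [hr, bE8_symm r y]
  ring

lemma S_invol {r : Fin 8 → ℤ} (hr : bE8 r r = 2) (x : Fin 8 → ℤ) :
    Sfun r (Sfun r x) = x := by
  funext i
  simp only [Sfun, map_sub, map_smul, LinearMap.sub_apply, LinearMap.smul_apply,
    smul_eq_mul, Pi.sub_apply, Pi.smul_apply]
  rw [hr]
  ring

noncomputable def Smap (r : Fin 8 → ℤ) : (Fin 8 → ℤ) →ₗ[ℤ] (Fin 8 → ℤ) where
  toFun := Sfun r
  map_add' x y := by
    funext i
    simp only [Sfun, map_add, LinearMap.add_apply, Pi.sub_apply, Pi.smul_apply,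
      Pi.add_apply, smul_eq_mul]
    ring
  map_smul' c x := by
    funext i
    simp only [Sfun, map_smul, LinearMap.smul_apply, Pi.sub_apply, Pi.smul_apply,
      smul_eq_mul, RingHom.id_apply]
    ring

noncomputable def Sequiv (r : Fin 8 → ℤ) (hr : bE8 r r = 2) : (Fin 8 → ℤ) ≃ₗ[ℤ] (Fin 8 → ℤ) :=
  LinearEquiv.ofInvolutive (Smap r) (fun x => S_invol hr x)

/-- fold of 𝔽₂-side reflections over a list of roots -/
def RL (L : List (Fin 8 → ℤ)) (x : Fin 8 → ZMod 2) : Fin 8 → ZMod 2 :=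
  L.foldr R x

lemma RL_nil (x : Fin 8 → ZMod 2) : RL [] x = x := rfl
lemma RL_cons (r : Fin 8 → ℤ) (L : List (Fin 8 → ℤ)) (x : Fin 8 → ZMod 2) :
    RL (r :: L) x = R r (RL L x) := rfl
lemma RL_append (A B : List (Fin 8 → ℤ)) (x : Fin 8 → ZMod 2) :
    RL (A ++ B) x = RL A (RL B x) := List.foldr_append ..

lemma exists_lift (L : List (Fin 8 → ℤ)) (hL : ∀ r ∈ L, bE8 r r = 2) :
    ∃ f : (Fin 8 → ℤ) ≃ₗ[ℤ] (Fin 8 → ℤ),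
      (∀ x y, bE8 (f x) (f y) = bE8 x y) ∧ (∀ z, redE8 (f z) = RL L (redE8 z)) := by
  induction L with
  | nil => exact ⟨LinearEquiv.refl ℤ _, fun x y => rfl, fun z => rfl⟩
  | cons r L ih =>
    obtain ⟨f, hf1, hf2⟩ := ih (fun r hr => hL r (List.mem_cons_of_mem _ hr))
    have hr : bE8 r r = 2 := hL r List.mem_cons_self
    refine ⟨f.trans (Sequiv r hr), fun x y => ?_, fun z => ?_⟩
    · show bE8 (Sfun r (f x)) (Sfun r (f y)) = bE8 x y
      rw [S_pres hr, hf1]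
    · show redE8 (Sfun r (f z)) = RL (r :: L) (redE8 z)
      rw [red_S, hf2, RL_cons]

set_option maxRecDepth 100000
set_option maxHeartbeats 2000000

def dec (n : ℕ) : Fin 8 → ZMod 2 := fun i => ((n >>> i.val) % 2 : ℕ)

def enc (x : Fin 8 → ZMod 2) : ℕ :=
  (x 0).val + 2*(x 1).val + 4*(x 2).val + 8*(x 3).val + 16*(x 4).val
  + 32*(x 5).val + 64*(x 6).val + 128*(x 7).val
lemma dec_enc : ∀ x : Fin 8 → ZMod 2, dec (enc x) = x := by decide
def eb (i : Fin 8) : Fin 8 → ZMod 2 := fun j => if j = i then 1 else 0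

def rootL : List (Fin 8 → ℤ) := [
  ![-1, 0, 0, 0, 0, 0, 0, 0],
  ![0, 1, 0, 0, 0, 0, 0, 0],
  ![-1, -1, 0, 0, 0, 0, 0, 0],
  ![0, 0, -1, 0, 0, 0, 0, 0],
  ![0, -1, -1, 0, 0, 0, 0, 0],
  ![-1, -1, -1, 0, 0, 0, 0, 0],
  ![0, 0, 0, -1, 0, 0, 0, 0],
  ![0, 0, -1, -1, 0, 0, 0, 0],
  ![0, -1, -1, -1, 0, 0, 0, 0],
  ![-1, -1, -1, -1, 0, 0, 0, 0],
  ![0, 0, 0, 0, -1, 0, 0, 0],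
  ![-1, -2, -3, -2, -1, 0, 0, -2],
  ![0, 0, 0, -1, -1, 0, 0, 0],
  ![0, 0, -1, -1, -1, 0, 0, 0],
  ![0, 1, 1, 1, 1, 0, 0, 0],
  ![1, 1, 1, 1, 1, 0, 0, 0],
  ![0, 0, 0, 0, 0, 1, 0, 0],
  ![1, 2, 3, 2, 2, 1, 0, 2],
  ![-1, -2, -4, -3, -2, -1, 0, -2],
  ![-2, -3, -4, -3, -2, -1, 0, -2],
  ![-1, -3, -4, -3, -2, -1, 0, -2],
  ![-1, -2, -3, -3, -2, -1, 0, -2],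
  ![0, 0, 0, 0, -1, -1, 0, 0],
  ![-1, -2, -3, -2, -1, -1, 0, -2],
  ![0, 0, 0, -1, -1, -1, 0, 0],
  ![0, 0, 1, 1, 1, 1, 0, 0],
  ![0, 1, 1, 1, 1, 1, 0, 0],
  ![1, 1, 1, 1, 1, 1, 0, 0],
  ![0, 0, 0, 0, 0, 0, -1, 0],
  ![-1, -2, -3, -2, -2, -2, -1, -2],
  ![-1, -2, -4, -3, -2, -2, -1, -2],
  ![2, 3, 4, 3, 2, 2, 1, 2],
  ![-1, -3, -4, -3, -2, -2, -1, -2],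
  ![-1, -2, -3, -3, -2, -2, -1, -2],
  ![-1, -2, -4, -4, -3, -2, -1, -2],
  ![2, 3, 4, 4, 3, 2, 1, 2],
  ![1, 3, 4, 4, 3, 2, 1, 2],
  ![-2, -4, -5, -4, -3, -2, -1, -2],
  ![2, 3, 5, 4, 3, 2, 1, 2],
  ![1, 3, 5, 4, 3, 2, 1, 2],
  ![-1, -2, -4, -3, -3, -2, -1, -2],
  ![-2, -3, -4, -3, -3, -2, -1, -2],
  ![-1, -3, -4, -3, -3, -2, -1, -2],
  ![-1, -2, -3, -3, -3, -2, -1, -2],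
  ![0, 0, 0, 0, 0, 1, 1, 0],
  ![1, 2, 3, 2, 2, 1, 1, 2],
  ![-1, -2, -4, -3, -2, -1, -1, -2],
  ![-2, -3, -4, -3, -2, -1, -1, -2],
  ![-1, -3, -4, -3, -2, -1, -1, -2],
  ![1, 2, 3, 3, 2, 1, 1, 2],
  ![0, 0, 0, 0, -1, -1, -1, 0],
  ![1, 2, 3, 2, 1, 1, 1, 2],
  ![0, 0, 0, -1, -1, -1, -1, 0],
  ![0, 0, -1, -1, -1, -1, -1, 0],
  ![0, 1, 1, 1, 1, 1, 1, 0],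
  ![-1, -1, -1, -1, -1, -1, -1, 0],
  ![0, 0, 0, 0, 0, 0, 0, 1],
  ![0, 0, 1, 0, 0, 0, 0, 1],
  ![0, 1, 1, 0, 0, 0, 0, 1],
  ![-1, -1, -1, 0, 0, 0, 0, -1],
  ![-1, -2, -2, -1, 0, 0, 0, -1],
  ![0, -1, -2, -1, 0, 0, 0, -1],
  ![-1, -1, -2, -1, 0, 0, 0, -1],
  ![0, 0, -1, -1, 0, 0, 0, -1],
  ![0, 1, 1, 1, 0, 0, 0, 1],
  ![-1, -1, -1, -1, 0, 0, 0, -1],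
  ![-1, -2, -2, -2, -1, 0, 0, -1],
  ![0, 1, 2, 2, 1, 0, 0, 1],
  ![-1, -1, -2, -2, -1, 0, 0, -1],
  ![-1, -2, -3, -2, -1, 0, 0, -1],
  ![1, 2, 2, 1, 1, 0, 0, 1],
  ![0, 1, 2, 1, 1, 0, 0, 1],
  ![-1, -1, -2, -1, -1, 0, 0, -1],
  ![0, 0, -1, -1, -1, 0, 0, -1],
  ![0, -1, -1, -1, -1, 0, 0, -1],
  ![-1, -1, -1, -1, -1, 0, 0, -1],
  ![-1, -2, -2, -2, -2, -1, 0, -1],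
  ![0, 1, 2, 2, 2, 1, 0, 1],
  ![1, 1, 2, 2, 2, 1, 0, 1],
  ![-1, -2, -3, -2, -2, -1, 0, -1],
  ![2, 4, 6, 5, 4, 3, 2, 3],
  ![-1, -2, -3, -3, -2, -1, 0, -1],
  ![1, 2, 2, 2, 1, 1, 0, 1],
  ![0, -1, -2, -2, -1, -1, 0, -1],
  ![1, 1, 2, 2, 1, 1, 0, 1],
  ![-1, -2, -3, -2, -1, -1, 0, -1],
  ![-1, -2, -2, -1, -1, -1, 0, -1],
  ![0, 1, 2, 1, 1, 1, 0, 1],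
  ![1, 1, 2, 1, 1, 1, 0, 1],
  ![0, 0, -1, -1, -1, -1, 0, -1],
  ![0, -1, -1, -1, -1, -1, 0, -1],
  ![1, 1, 1, 1, 1, 1, 0, 1],
  ![-1, -2, -2, -2, -2, -2, -1, -1],
  ![0, -1, -2, -2, -2, -2, -1, -1],
  ![-1, -1, -2, -2, -2, -2, -1, -1],
  ![1, 2, 3, 2, 2, 2, 1, 1],
  ![-2, -4, -6, -5, -4, -2, -1, -3],
  ![-1, -2, -3, -3, -2, -2, -1, -1],
  ![-2, -4, -6, -4, -3, -2, -1, -3],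
  ![2, 4, 5, 4, 3, 2, 1, 3],
  ![2, 3, 5, 4, 3, 2, 1, 3],
  ![1, 3, 5, 4, 3, 2, 1, 3],
  ![-2, -4, -6, -5, -3, -2, -1, -3],
  ![-1, -2, -3, -3, -3, -2, -1, -1],
  ![1, 2, 2, 2, 2, 1, 1, 1],
  ![0, -1, -2, -2, -2, -1, -1, -1],
  ![1, 1, 2, 2, 2, 1, 1, 1],
  ![-1, -2, -3, -2, -2, -1, -1, -1],
  ![-2, -4, -6, -5, -4, -3, -1, -3],
  ![-1, -2, -3, -3, -2, -1, -1, -1],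
  ![1, 2, 2, 2, 1, 1, 1, 1],
  ![0, 1, 2, 2, 1, 1, 1, 1],
  ![1, 1, 2, 2, 1, 1, 1, 1],
  ![-1, -2, -3, -2, -1, -1, -1, -1],
  ![1, 2, 2, 1, 1, 1, 1, 1],
  ![0, 1, 2, 1, 1, 1, 1, 1],
  ![1, 1, 2, 1, 1, 1, 1, 1],
  ![0, 0, 1, 1, 1, 1, 1, 1],
  ![0, -1, -1, -1, -1, -1, -1, -1],
  ![1, 1, 1, 1, 1, 1, 1, 1]]

def rootVec (m : ℕ) : Fin 8 → ℤ := rootL.getD m ![-1, 0, 0, 0, 0, 0, 0, 0]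

lemma rootF_norm : ∀ m : Fin 120, PZ (rootL.getD m.val ![-1, 0, 0, 0, 0, 0, 0, 0]) = 1 := by decide

lemma rootVec_norm (m : ℕ) : bE8 (rootVec m) (rootVec m) = 2 := by
  rw [bE8_self]
  have h : PZ (rootVec m) = 1 := by
    by_cases h : m < 120
    · exact rootF_norm ⟨m, h⟩
    · rw [rootVec, List.getD_eq_default _ _ (by simp [rootL]; omega)]
      decide
  rw [h]; ring

def wt0 : List (List ℕ) := [[],
  [],
  [2],
  [1],
  [1, 5],
  [],
  [5],
  [4],
  [4, 9],
  [],
  [],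
  [],
  [1, 9],
  [],
  [9],
  [8],
  [8, 15],
  [],
  [],
  [],
  [],
  [19, 26],
  [],
  [],
  [4, 15],
  [],
  [],
  [],
  [1, 15],
  [],
  [15],
  [14],
  [14, 27],
  [],
  [],
  [],
  [],
  [8, 19],
  [],
  [],
  [],
  [1, 19],
  [20],
  [19],
  [],
  [4, 19],
  [],
  [],
  [8, 27],
  [],
  [],
  [],
  [],
  [14, 19],
  [],
  [],
  [4, 27],
  [],
  [],
  [],
  [1, 27],
  [],
  [27],
  [26],
  [19, 48],
  [],
  [],
  [],
  [],
  [8, 31],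
  [],
  [],
  [],
  [1, 31],
  [32],
  [31],
  [],
  [4, 31],
  [],
  [],
  [],
  [1, 35],
  [36],
  [35],
  [1, 39],
  [],
  [39],
  [38],
  [],
  [1, 41],
  [42],
  [41],
  [],
  [4, 41],
  [],
  [],
  [14, 55],
  [],
  [],
  [],
  [],
  [8, 47],
  [],
  [],
  [],
  [1, 47],
  [48],
  [47],
  [],
  [4, 47],
  [],
  [],
  [8, 55],
  [],
  [],
  [],
  [],
  [14, 47],
  [],
  [],
  [4, 55],
  [],
  [],
  [],
  [1, 55],
  [],
  [55],
  [54],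
  [4, 59],
  [],
  [],
  [],
  [1, 59],
  [],
  [59],
  [58],
  [],
  [1, 61],
  [62],
  [61],
  [1, 65],
  [],
  [65],
  [64],
  [],
  [1, 67],
  [68],
  [67],
  [],
  [4, 67],
  [],
  [],
  [],
  [1, 71],
  [72],
  [71],
  [1, 75],
  [],
  [75],
  [74],
  [],
  [1, 77],
  [78],
  [77],
  [],
  [4, 77],
  [],
  [],
  [31, 106],
  [],
  [],
  [],
  [],
  [8, 77],
  [],
  [],
  [],
  [1, 83],
  [84],
  [83],
  [],
  [4, 83],
  [],
  [],
  [],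
  [1, 87],
  [88],
  [87],
  [1, 91],
  [],
  [91],
  [90],
  [],
  [1, 93],
  [94],
  [93],
  [],
  [4, 93],
  [],
  [],
  [14, 101],
  [],
  [],
  [],
  [],
  [8, 93],
  [],
  [],
  [4, 101],
  [],
  [],
  [],
  [1, 101],
  [],
  [101],
  [100],
  [8, 101],
  [],
  [],
  [],
  [],
  [14, 93],
  [],
  [],
  [],
  [1, 105],
  [106],
  [105],
  [],
  [4, 105],
  [],
  [],
  [19, 94],
  [],
  [],
  [],
  [],
  [8, 105],
  [],
  [],
  [],
  [1, 111],
  [112],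
  [111],
  [],
  [4, 111],
  [],
  [],
  [],
  [1, 115],
  [116],
  [115],
  [1, 119],
  [],
  [119],
  [118]]

def wt1 : List (List ℕ) := [[],
  [],
  [],
  [0],
  [],
  [],
  [3],
  [0, 3],
  [],
  [],
  [],
  [],
  [],
  [],
  [7],
  [0, 7],
  [],
  [],
  [],
  [],
  [],
  [],
  [],
  [],
  [],
  [],
  [],
  [],
  [],
  [],
  [13],
  [0, 13],
  [],
  [],
  [],
  [],
  [],
  [],
  [],
  [],
  [],
  [],
  [0, 18],
  [18],
  [],
  [],
  [],
  [],
  [],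
  [],
  [],
  [],
  [],
  [],
  [],
  [],
  [],
  [],
  [],
  [],
  [],
  [],
  [25],
  [0, 25],
  [],
  [],
  [],
  [],
  [],
  [],
  [],
  [],
  [],
  [],
  [0, 30],
  [30],
  [],
  [],
  [],
  [],
  [],
  [],
  [0, 34],
  [34],
  [],
  [],
  [37],
  [0, 37],
  [],
  [],
  [0, 40],
  [40],
  [],
  [],
  [],
  [],
  [],
  [],
  [],
  [],
  [],
  [],
  [],
  [],
  [],
  [],
  [0, 46],
  [46],
  [],
  [],
  [],
  [],
  [],
  [],
  [],
  [],
  [],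
  [],
  [],
  [],
  [],
  [],
  [],
  [],
  [],
  [],
  [53],
  [0, 53],
  [],
  [],
  [],
  [],
  [],
  [],
  [57],
  [0, 57],
  [],
  [],
  [0, 60],
  [60],
  [],
  [],
  [63],
  [0, 63],
  [],
  [],
  [0, 66],
  [66],
  [],
  [],
  [],
  [],
  [],
  [],
  [0, 70],
  [70],
  [],
  [],
  [73],
  [0, 73],
  [],
  [],
  [0, 76],
  [76],
  [],
  [],
  [],
  [],
  [],
  [],
  [],
  [],
  [],
  [],
  [],
  [],
  [],
  [],
  [0, 82],
  [82],
  [],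
  [],
  [],
  [],
  [],
  [],
  [0, 86],
  [86],
  [],
  [],
  [89],
  [0, 89],
  [],
  [],
  [0, 92],
  [92],
  [],
  [],
  [],
  [],
  [],
  [],
  [],
  [],
  [],
  [],
  [],
  [],
  [],
  [],
  [],
  [],
  [],
  [],
  [99],
  [0, 99],
  [],
  [],
  [],
  [],
  [],
  [],
  [],
  [],
  [],
  [],
  [0, 104],
  [104],
  [],
  [],
  [],
  [],
  [],
  [],
  [],
  [],
  [],
  [],
  [],
  [],
  [],
  [],
  [0, 110],
  [110],
  [],
  [],
  [],
  [],
  [],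
  [],
  [0, 114],
  [114],
  [],
  [],
  [117],
  [0, 117]]

def wt2 : List (List ℕ) := [[],
  [],
  [],
  [],
  [],
  [],
  [],
  [],
  [],
  [],
  [],
  [],
  [6],
  [],
  [],
  [],
  [],
  [],
  [],
  [],
  [],
  [],
  [],
  [],
  [],
  [],
  [],
  [],
  [12],
  [],
  [],
  [],
  [],
  [],
  [],
  [],
  [],
  [],
  [],
  [],
  [],
  [21],
  [],
  [],
  [],
  [],
  [],
  [],
  [],
  [],
  [],
  [],
  [],
  [],
  [],
  [],
  [],
  [],
  [],
  [],
  [24],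
  [],
  [],
  [],
  [],
  [],
  [],
  [],
  [],
  [],
  [],
  [],
  [],
  [33],
  [],
  [],
  [],
  [],
  [],
  [],
  [],
  [6, 43],
  [],
  [],
  [56, 98],
  [],
  [],
  [],
  [],
  [43],
  [],
  [],
  [],
  [],
  [],
  [],
  [],
  [],
  [],
  [],
  [],
  [],
  [],
  [],
  [],
  [49],
  [],
  [],
  [],
  [],
  [],
  [],
  [],
  [],
  [],
  [],
  [],
  [],
  [],
  [],
  [],
  [],
  [],
  [],
  [52],
  [],
  [],
  [],
  [],
  [],
  [],
  [],
  [56],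
  [],
  [],
  [],
  [],
  [12, 69],
  [],
  [],
  [6, 56],
  [],
  [],
  [],
  [],
  [69],
  [],
  [],
  [],
  [],
  [],
  [],
  [],
  [6, 69],
  [],
  [],
  [12, 56],
  [],
  [],
  [],
  [],
  [79],
  [],
  [],
  [],
  [],
  [],
  [],
  [],
  [],
  [],
  [],
  [],
  [],
  [],
  [],
  [],
  [85],
  [],
  [],
  [],
  [],
  [],
  [],
  [],
  [6, 85],
  [],
  [],
  [21, 69],
  [],
  [],
  [],
  [],
  [95],
  [],
  [],
  [],
  [],
  [],
  [],
  [],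
  [],
  [],
  [],
  [],
  [],
  [],
  [],
  [],
  [],
  [],
  [],
  [98],
  [],
  [],
  [],
  [],
  [],
  [],
  [],
  [],
  [],
  [],
  [],
  [],
  [107],
  [],
  [],
  [],
  [],
  [],
  [],
  [],
  [],
  [],
  [],
  [],
  [],
  [],
  [],
  [],
  [113],
  [],
  [],
  [],
  [],
  [],
  [],
  [],
  [6, 113],
  [],
  [],
  [33, 85],
  [],
  [],
  []]

def wt3 : List (List ℕ) := [[],
  [],
  [],
  [],
  [],
  [],
  [],
  [],
  [],
  [],
  [],
  [],
  [],
  [],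
  [],
  [],
  [],
  [],
  [],
  [],
  [],
  [],
  [],
  [],
  [10],
  [],
  [],
  [],
  [],
  [],
  [],
  [],
  [],
  [],
  [],
  [],
  [],
  [],
  [],
  [],
  [],
  [],
  [],
  [],
  [],
  [17],
  [],
  [],
  [],
  [],
  [],
  [],
  [],
  [],
  [],
  [],
  [22],
  [],
  [],
  [],
  [],
  [],
  [],
  [],
  [],
  [],
  [],
  [],
  [],
  [],
  [],
  [],
  [],
  [],
  [],
  [],
  [],
  [29],
  [],
  [],
  [],
  [],
  [],
  [],
  [],
  [],
  [],
  [],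
  [],
  [],
  [],
  [],
  [],
  [10, 29],
  [],
  [],
  [],
  [],
  [],
  [],
  [],
  [],
  [],
  [],
  [],
  [],
  [],
  [],
  [],
  [45],
  [],
  [],
  [],
  [],
  [],
  [],
  [],
  [],
  [],
  [],
  [50],
  [],
  [],
  [],
  [],
  [],
  [],
  [],
  [17, 81],
  [],
  [],
  [],
  [],
  [],
  [],
  [],
  [],
  [],
  [],
  [],
  [],
  [],
  [],
  [],
  [],
  [],
  [],
  [],
  [],
  [22, 81],
  [],
  [],
  [],
  [],
  [],
  [],
  [],
  [],
  [],
  [],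
  [],
  [],
  [],
  [],
  [],
  [81],
  [],
  [],
  [],
  [],
  [],
  [],
  [],
  [],
  [],
  [],
  [],
  [],
  [],
  [],
  [],
  [10, 81],
  [],
  [],
  [],
  [],
  [],
  [],
  [],
  [],
  [],
  [],
  [],
  [],
  [],
  [],
  [],
  [97],
  [],
  [],
  [],
  [],
  [],
  [],
  [],
  [],
  [],
  [],
  [102],
  [],
  [],
  [],
  [],
  [],
  [],
  [],
  [],
  [],
  [],
  [],
  [],
  [],
  [],
  [],
  [],
  [],
  [],
  [],
  [],
  [109],
  [],
  [],
  [],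
  [],
  [],
  [],
  [],
  [],
  [],
  [],
  [],
  [],
  [],
  [],
  [],
  [10, 109],
  [],
  [],
  [],
  [],
  [],
  [],
  [],
  [],
  [],
  []]

def wt4 : List (List ℕ) := [[],
  [],
  [],
  [],
  [],
  [],
  [],
  [],
  [],
  [],
  [],
  [],
  [],
  [],
  [],
  [],
  [],
  [],
  [],
  [],
  [],
  [],
  [],
  [],
  [],
  [],
  [],
  [],
  [],
  [],
  [],
  [],
  [],
  [],
  [],
  [],
  [],
  [23],
  [],
  [],
  [],
  [],
  [],
  [],
  [],
  [],
  [],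
  [],
  [16],
  [],
  [],
  [],
  [],
  [],
  [],
  [],
  [],
  [],
  [],
  [],
  [],
  [],
  [],
  [],
  [],
  [],
  [],
  [],
  [],
  [16, 51],
  [],
  [],
  [],
  [],
  [],
  [],
  [],
  [],
  [],
  [],
  [],
  [],
  [],
  [],
  [],
  [],
  [],
  [],
  [],
  [],
  [],
  [],
  [],
  [],
  [],
  [],
  [],
  [],
  [],
  [],
  [],
  [51],
  [],
  [],
  [],
  [],
  [],
  [],
  [],
  [],
  [],
  [],
  [44],
  [],
  [],
  [],
  [],
  [],
  [],
  [],
  [],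
  [],
  [],
  [],
  [],
  [],
  [],
  [],
  [],
  [],
  [],
  [],
  [],
  [],
  [],
  [],
  [],
  [],
  [],
  [],
  [],
  [],
  [],
  [],
  [],
  [],
  [],
  [],
  [],
  [],
  [],
  [],
  [],
  [],
  [],
  [],
  [],
  [],
  [],
  [],
  [],
  [],
  [],
  [],
  [],
  [],
  [],
  [],
  [],
  [],
  [],
  [],
  [],
  [44, 103],
  [],
  [],
  [],
  [],
  [],
  [],
  [],
  [],
  [],
  [],
  [],
  [],
  [],
  [],
  [],
  [],
  [],
  [],
  [],
  [],
  [],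
  [],
  [],
  [],
  [],
  [],
  [],
  [],
  [],
  [],
  [],
  [103],
  [],
  [],
  [],
  [],
  [],
  [],
  [],
  [],
  [],
  [],
  [96],
  [],
  [],
  [],
  [],
  [],
  [],
  [],
  [],
  [],
  [],
  [],
  [],
  [],
  [],
  [],
  [],
  [],
  [],
  [],
  [],
  [16, 103],
  [],
  [],
  [],
  [],
  [],
  [],
  [],
  [],
  [],
  [],
  [],
  [],
  [],
  [],
  [],
  [],
  [],
  []]

def wt5 : List (List ℕ) := [[],
  [],
  [],
  [],
  [],
  [],
  [],
  [],
  [],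
  [],
  [],
  [],
  [],
  [],
  [],
  [],
  [],
  [],
  [],
  [],
  [],
  [],
  [],
  [],
  [],
  [],
  [],
  [],
  [],
  [],
  [],
  [],
  [],
  [],
  [],
  [],
  [],
  [],
  [],
  [],
  [],
  [],
  [],
  [],
  [],
  [],
  [],
  [],
  [],
  [],
  [],
  [],
  [],
  [11],
  [],
  [],
  [],
  [],
  [],
  [],
  [],
  [],
  [],
  [],
  [],
  [],
  [],
  [],
  [],
  [],
  [],
  [],
  [],
  [],
  [],
  [],
  [],
  [],
  [],
  [],
  [],
  [],
  [],
  [],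
  [],
  [],
  [],
  [],
  [],
  [],
  [],
  [],
  [],
  [],
  [],
  [],
  [28],
  [],
  [],
  [],
  [],
  [],
  [],
  [],
  [],
  [],
  [],
  [],
  [],
  [],
  [],
  [],
  [],
  [],
  [],
  [],
  [],
  [11, 28],
  [],
  [],
  [],
  [],
  [],
  [],
  [],
  [],
  [],
  [],
  [],
  [],
  [],
  [],
  [],
  [],
  [],
  [],
  [],
  [],
  [],
  [],
  [],
  [],
  [],
  [],
  [],
  [],
  [],
  [],
  [],
  [],
  [],
  [],
  [],
  [],
  [],
  [],
  [],
  [],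
  [],
  [],
  [],
  [],
  [],
  [],
  [],
  [],
  [],
  [],
  [],
  [],
  [],
  [],
  [],
  [],
  [],
  [],
  [],
  [],
  [],
  [],
  [],
  [],
  [],
  [],
  [],
  [],
  [],
  [],
  [],
  [],
  [],
  [],
  [],
  [],
  [],
  [],
  [],
  [],
  [],
  [],
  [108],
  [],
  [],
  [],
  [],
  [],
  [],
  [],
  [],
  [],
  [],
  [],
  [],
  [],
  [],
  [],
  [],
  [],
  [],
  [],
  [],
  [11, 108],
  [],
  [],
  [],
  [],
  [],
  [],
  [],
  [],
  [],
  [],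
  [],
  [],
  [],
  [],
  [],
  [],
  [],
  [],
  [],
  [],
  [],
  [],
  [],
  [],
  [],
  [],
  [],
  [],
  [],
  [],
  [],
  [],
  [],
  []]

def wt6 : List (List ℕ) := [[],
  [],
  [],
  [],
  [],
  [],
  [],
  [],
  [],
  [],
  [],
  [],
  [],
  [],
  [],
  [],
  [],
  [],
  [],
  [],
  [],
  [],
  [],
  [],
  [],
  [],
  [],
  [],
  [],
  [],
  [],
  [],
  [],
  [],
  [],
  [],
  [],
  [],
  [],
  [],
  [],
  [],
  [],
  [],
  [],
  [],
  [],
  [],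
  [],
  [],
  [],
  [],
  [],
  [],
  [],
  [],
  [],
  [],
  [],
  [],
  [],
  [],
  [],
  [],
  [],
  [],
  [],
  [],
  [],
  [],
  [],
  [],
  [],
  [],
  [],
  [],
  [],
  [],
  [],
  [],
  [],
  [],
  [],
  [],
  [],
  [],
  [],
  [],
  [],
  [],
  [],
  [],
  [],
  [],
  [],
  [],
  [],
  [],
  [],
  [],
  [],
  [],
  [],
  [],
  [],
  [],
  [],
  [],
  [],
  [],
  [],
  [],
  [],
  [],
  [],
  [],
  [],
  [],
  [],
  [],
  [],
  [],
  [],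
  [],
  [],
  [],
  [],
  [],
  [],
  [],
  [],
  [],
  [],
  [],
  [],
  [],
  [],
  [],
  [],
  [],
  [],
  [],
  [],
  [],
  [],
  [],
  [],
  [],
  [],
  [],
  [],
  [],
  [],
  [],
  [],
  [],
  [],
  [],
  [],
  [],
  [],
  [],
  [],
  [],
  [],
  [],
  [],
  [],
  [],
  [],
  [],
  [],
  [],
  [],
  [],
  [],
  [],
  [],
  [],
  [],
  [],
  [],
  [],
  [],
  [],
  [],
  [],
  [],
  [],
  [],
  [],
  [],
  [],
  [],
  [],
  [],
  [],
  [],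
  [],
  [],
  [],
  [],
  [],
  [],
  [],
  [],
  [],
  [],
  [],
  [],
  [],
  [],
  [],
  [],
  [],
  [],
  [],
  [],
  [],
  [],
  [],
  [],
  [],
  [],
  [],
  [],
  [],
  [],
  [],
  [],
  [],
  [],
  [80],
  [],
  [],
  [],
  [],
  [],
  [],
  [],
  [],
  [],
  [],
  [],
  [],
  [],
  [],
  [],
  [],
  [],
  [],
  [],
  [],
  [],
  [],
  []]

def wt7 : List (List ℕ) := [[],
  [],
  [],
  [],
  [],
  [],
  [],
  [],
  [],
  [],
  [],
  [],
  [],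
  [],
  [],
  [],
  [],
  [],
  [],
  [],
  [],
  [],
  [],
  [],
  [],
  [],
  [],
  [],
  [],
  [],
  [],
  [],
  [],
  [],
  [],
  [],
  [],
  [],
  [],
  [],
  [],
  [],
  [],
  [],
  [],
  [],
  [],
  [],
  [],
  [],
  [],
  [],
  [],
  [],
  [],
  [],
  [],
  [],
  [],
  [],
  [],
  [],
  [],
  [],
  [],
  [],
  [],
  [],
  [],
  [],
  [],
  [],
  [],
  [],
  [],
  [],
  [],
  [],
  [],
  [],
  [],
  [],
  [],
  [],
  [],
  [],
  [],
  [],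
  [],
  [],
  [],
  [],
  [],
  [],
  [],
  [],
  [],
  [],
  [],
  [],
  [],
  [],
  [],
  [],
  [],
  [],
  [],
  [],
  [],
  [],
  [],
  [],
  [],
  [],
  [],
  [],
  [],
  [],
  [],
  [],
  [],
  [],
  [],
  [],
  [],
  [],
  [],
  [],
  [],
  [],
  [],
  [],
  [],
  [],
  [],
  [],
  [],
  [],
  [],
  [],
  [],
  [],
  [],
  [],
  [],
  [],
  [],
  [],
  [],
  [],
  [],
  [],
  [],
  [],
  [],
  [],
  [],
  [],
  [],
  [],
  [],
  [],
  [],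
  [],
  [],
  [],
  [],
  [],
  [],
  [],
  [],
  [],
  [],
  [],
  [],
  [],
  [],
  [],
  [],
  [],
  [],
  [],
  [],
  [],
  [],
  [],
  [],
  [],
  [],
  [],
  [],
  [],
  [],
  [],
  [],
  [],
  [],
  [],
  [],
  [],
  [],
  [],
  [],
  [],
  [],
  [],
  [],
  [],
  [],
  [],
  [],
  [],
  [],
  [],
  [],
  [],
  [],
  [],
  [],
  [],
  [],
  [],
  [],
  [],
  [],
  [],
  [],
  [],
  [],
  [],
  [],
  [],
  [],
  [],
  [],
  [],
  [],
  [],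
  [],
  [],
  [],
  [],
  [],
  [],
  [],
  [],
  [],
  [],
  [],
  [],
  [],
  [],
  [],
  [],
  [],
  []]

def wt : List (List (List ℕ)) := [wt0, wt1, wt2, wt3, wt4, wt5, wt6, wt7]

def wrd (k n : ℕ) : List (Fin 8 → ℤ) := ((wt.getD k []).getD n []).map rootVec

lemma stepAll : ∀ k : Fin 8, ∀ n : Fin 256,
    (qF (dec n.val) = 1 ∧
      (∀ i : Fin 8, i.val < k.val → BF (eb i) (dec n.val) = BF (eb i) (eb k)) ∧
      (∃ j : Fin 8, k.val ≤ j.val ∧ dec n.val j ≠ 0)) →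
    RL (wrd k.val n.val) (dec n.val) = eb k ∧
      (∀ i : Fin 8, i.val < k.val → RL (wrd k.val n.val) (eb i) = eb i) := by decide

lemma red_surj (x : Fin 8 → ZMod 2) : ∃ z, redE8 z = x := ⟨_, red_lift x⟩

lemma red_zero : redE8 0 = 0 := by funext i; simp [redE8]

lemma RL_add (L : List (Fin 8 → ℤ)) (hL : ∀ r ∈ L, bE8 r r = 2) (x y : Fin 8 → ZMod 2) :
    RL L (x + y) = RL L x + RL L y := by
  obtain ⟨f, hf1, hf2⟩ := exists_lift L hL
  obtain ⟨a, ha⟩ := red_surj x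
  obtain ⟨b, hb⟩ := red_surj y
  rw [← ha, ← hb, ← red_add, ← hf2, ← hf2, ← hf2, map_add, red_add]

lemma RL_zero (L : List (Fin 8 → ℤ)) (hL : ∀ r ∈ L, bE8 r r = 2) : RL L 0 = 0 := by
  obtain ⟨f, hf1, hf2⟩ := exists_lift L hL
  rw [← red_zero, ← hf2, map_zero, red_zero]

lemma RL_smul (L : List (Fin 8 → ℤ)) (hL : ∀ r ∈ L, bE8 r r = 2) (c : ZMod 2)
    (x : Fin 8 → ZMod 2) : RL L (c • x) = c • RL L x := by
  have hc : c = 0 ∨ c = 1 := by revert c; decide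
  rcases hc with rfl | rfl
  · simp [RL_zero L hL]
  · simp

lemma PZ_eq_of_bE8 {a b : Fin 8 → ℤ} (h : bE8 a a = bE8 b b) : PZ a = PZ b := by
  have ha := bE8_self a
  have hb := bE8_self b
  omega

lemma RL_qF (L : List (Fin 8 → ℤ)) (hL : ∀ r ∈ L, bE8 r r = 2) (x : Fin 8 → ZMod 2) :
    qF (RL L x) = qF x := by
  obtain ⟨f, hf1, hf2⟩ := exists_lift L hL
  obtain ⟨a, ha⟩ := red_surj x
  rw [← ha, ← hf2, qF_red, qF_red, PZ_eq_of_bE8 (hf1 a a)]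

lemma RL_BF (L : List (Fin 8 → ℤ)) (hL : ∀ r ∈ L, bE8 r r = 2) (x y : Fin 8 → ZMod 2) :
    BF (RL L x) (RL L y) = BF x y := by
  obtain ⟨f, hf1, hf2⟩ := exists_lift L hL
  obtain ⟨a, ha⟩ := red_surj x
  obtain ⟨b, hb⟩ := red_surj y
  rw [← ha, ← hb, ← hf2, ← hf2, BF_red, BF_red, hf1]

lemma R_R {r : Fin 8 → ℤ} (hr : bE8 r r = 2) (x : Fin 8 → ZMod 2) : R r (R r x) = x := by
  obtain ⟨a, ha⟩ := red_surj x
  rw [← ha, ← red_S, ← red_S, S_invol hr]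

lemma RL_rev_left (L : List (Fin 8 → ℤ)) (hL : ∀ r ∈ L, bE8 r r = 2) (x : Fin 8 → ZMod 2) :
    RL L.reverse (RL L x) = x := by
  induction L generalizing x with
  | nil => rfl
  | cons r L ih =>
    have hr : bE8 r r = 2 := hL r List.mem_cons_self
    have hL' : ∀ s ∈ L, bE8 s s = 2 := fun s hs => hL s (List.mem_cons_of_mem _ hs)
    rw [List.reverse_cons, RL_cons, RL_append, show RL [r] (R r (RL L x)) = R r (R r (RL L x)) from rfl,
      R_R hr, ih hL']

lemma RL_rev_right (L : List (Fin 8 → ℤ)) (hL : ∀ r ∈ L, bE8 r r = 2) (x : Fin 8 → ZMod 2) :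
    RL L (RL L.reverse x) = x := by
  induction L generalizing x with
  | nil => rfl
  | cons r L ih =>
    have hr : bE8 r r = 2 := hL r List.mem_cons_self
    have hL' : ∀ s ∈ L, bE8 s s = 2 := fun s hs => hL s (List.mem_cons_of_mem _ hs)
    rw [List.reverse_cons, RL_cons, RL_append, show RL [r] x = R r x from rfl, ih hL', R_R hr]

lemma RL_sum (L : List (Fin 8 → ℤ)) (hL : ∀ r ∈ L, bE8 r r = 2) {ι : Type*}
    (s : Finset ι) (c : ι → ZMod 2) (v : ι → (Fin 8 → ZMod 2)) :
    RL L (∑ i ∈ s, c i • v i) = ∑ i ∈ s, c i • RL L (v i) := by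
  calc RL L (∑ i ∈ s, c i • v i) = ∑ i ∈ s, RL L (c i • v i) :=
        map_sum (AddMonoidHom.mk' (RL L) (RL_add L hL)) (fun i => c i • v i) s
    _ = ∑ i ∈ s, c i • RL L (v i) := Finset.sum_congr rfl (fun i _ => RL_smul L hL _ _)

lemma qF_eb : ∀ i : Fin 8, qF (eb i) = 1 := by decide

lemma enc_lt : ∀ x : Fin 8 → ZMod 2, enc x < 256 := by decide

lemma wrd_norm (k n : ℕ) : ∀ r ∈ wrd k n, bE8 r r = 2 := by
  intro r hr
  obtain ⟨m, _, rfl⟩ := List.mem_map.mp hr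
  exact rootVec_norm m

lemma eb_decomp (y : Fin 8 → ZMod 2) : y = ∑ i : Fin 8, y i • eb i := by
  funext j
  rw [Finset.sum_apply]
  simp only [Pi.smul_apply, eb, smul_eq_mul, mul_ite, mul_one, mul_zero]
  rw [Finset.sum_ite_eq]
  simp

lemma extend (g : (Fin 8 → ZMod 2) ≃ₗ[ZMod 2] (Fin 8 → ZMod 2))
    (hg : ∀ x, qF (g x) = qF x) :
    ∀ k : ℕ, k ≤ 8 → ∃ L : List (Fin 8 → ℤ), (∀ r ∈ L, bE8 r r = 2) ∧
      ∀ i : Fin 8, i.val < k → RL L (eb i) = g (eb i) := by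
  have hgBF : ∀ x y, BF (g x) (g y) = BF x y := by
    intro x y
    rw [BF, BF, ← map_add, hg, hg, hg]
  intro k
  induction k with
  | zero => exact fun _ => ⟨[], by simp, fun i h => absurd h (by omega)⟩
  | succ k ih =>
    intro hk
    obtain ⟨L, hL, hLi⟩ := ih (by omega)
    set K : Fin 8 := ⟨k, by omega⟩ with hK
    set d := RL L.reverse (g (eb K)) with hd
    have hLrev : ∀ r ∈ L.reverse, bE8 r r = 2 := fun r hr => hL r (List.mem_reverse.mp hr)
    have hRLd : RL L d = g (eb K) := RL_rev_right L hL _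
    have c1 : qF d = 1 := by rw [hd, RL_qF L.reverse hLrev, hg, qF_eb]
    have c2 : ∀ i : Fin 8, i.val < k → BF (eb i) d = BF (eb i) (eb K) := by
      intro i hi
      have h1 := RL_BF L hL (eb i) d
      rw [hLi i hi, hRLd, hgBF] at h1
      exact h1.symm
    have c3 : ∃ j : Fin 8, k ≤ j.val ∧ d j ≠ 0 := by
      by_contra hcon
      push_neg at hcon
      have hdsum : d = ∑ i ∈ Finset.univ.filter (fun i : Fin 8 => i.val < k), d i • eb i := by
        funext j
        rw [Finset.sum_apply]
        simp only [Pi.smul_apply, eb, smul_eq_mul, mul_ite, mul_one, mul_zero]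
        rw [Finset.sum_ite_eq]
        by_cases hj : j.val < k
        · simp [hj]
        · simp only [Finset.mem_filter, Finset.mem_univ, true_and, hj, if_false]
          exact hcon j (by omega)
      have heq : g (eb K) = g (∑ i ∈ Finset.univ.filter (fun i : Fin 8 => i.val < k), d i • eb i) := by
        rw [map_sum]
        conv_lhs => rw [← hRLd, hdsum]
        rw [RL_sum L hL]
        refine Finset.sum_congr rfl (fun i hi => ?_)
        rw [map_smul, hLi i (Finset.mem_filter.mp hi).2]
      have heb := g.injective heq
      have hKv : K.val = k := rfl
      have hthis := congrFun heb K
      rw [Finset.sum_apply] at hthis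
      have hL1 : eb K K = 1 := by simp [eb]
      have hR1 : (∑ i ∈ Finset.univ.filter (fun i : Fin 8 => i.val < k), (d i • eb i) K) = 0 := by
        apply Finset.sum_eq_zero
        intro i hi
        have hik := (Finset.mem_filter.mp hi).2
        have hne : K ≠ i := by
          intro hKi
          have hvv : K.val = i.val := congrArg Fin.val hKi
          omega
        simp [eb, Pi.smul_apply, if_neg hne]
      rw [hL1, hR1] at hthis
      exact one_ne_zero hthis
    -- apply the step lemma
    have hstep := stepAll K ⟨enc d, enc_lt d⟩
    simp only [dec_enc] at hstep
    obtain ⟨h1, h2⟩ := hstep ⟨c1, c2, c3⟩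
    set u := wrd K.val (enc d) with hu
    have hun : ∀ r ∈ u, bE8 r r = 2 := wrd_norm _ _
    have hurev : ∀ r ∈ u.reverse, bE8 r r = 2 := fun r hr => hun r (List.mem_reverse.mp hr)
    refine ⟨L ++ u.reverse, ?_, ?_⟩
    · intro r hr
      rcases List.mem_append.mp hr with h | h
      · exact hL r h
      · exact hurev r h
    · intro i hi
      rw [RL_append]
      rcases Nat.lt_or_ge i.val k with h | h
      · have hfix : RL u.reverse (eb i) = eb i := by
          have hcg := congrArg (RL u.reverse) (h2 i h)
          rw [RL_rev_left u hun] at hcg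
          exact hcg.symm
        rw [hfix]
        exact hLi i h
      · have hKv : K.val = k := rfl
        have hik : i = K := Fin.ext (by omega)
        have hmv : RL u.reverse (eb K) = d := by
          have hcg := congrArg (RL u.reverse) h1
          rw [RL_rev_left u hun] at hcg
          exact hcg.symm
        rw [hik, hmv, hRLd]

/-- **Surjectivity of `O(E8) → O(E8/2E8)`.**  Every automorphism of the quadratic space
`E8/2E8 ≅ 𝔽₂^8` (with quadratic form `q(e + 2E8) = ½(e,e) mod 2`) is induced by an
isometry of the `E8` lattice. -/
theorem OE8_to_OE8mod2_surjective :
    ∀ g : (Fin 8 → ZMod 2) ≃ₗ[ZMod 2] (Fin 8 → ZMod 2),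
      (∀ x : Fin 8 → ZMod 2, qbarE8 (g x) = qbarE8 x) →
      ∃ f : (Fin 8 → ℤ) ≃ₗ[ℤ] (Fin 8 → ℤ),
        (∀ x y : Fin 8 → ℤ, bE8 (f x) (f y) = bE8 x y) ∧
        (∀ x : Fin 8 → ℤ, redE8 (f x) = g (redE8 x)) := by
  intro g hq
  have hg : ∀ x, qF (g x) = qF x := by
    intro x
    rw [← qbar_eq_qF, ← qbar_eq_qF]
    exact hq x
  obtain ⟨L, hL, hLi⟩ := extend g hg 8 le_rfl
  obtain ⟨f, hf1, hf2⟩ := exists_lift L hL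
  refine ⟨f, hf1, fun x => ?_⟩
  rw [hf2]
  have key : ∀ y : Fin 8 → ZMod 2, RL L y = g y := by
    intro y
    conv_lhs => rw [eb_decomp y]
    rw [RL_sum L hL]
    conv_rhs => rw [eb_decomp y, map_sum]
    refine Finset.sum_congr rfl (fun i _ => ?_)
    rw [map_smul, hLi i i.isLt]
  exact key _
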